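/- For all positive integers d, k, D, n there exists N with the following property: for every set P of real polynomials in the d·k coordinates of k points of ℝ^d, each of total degree at most D, and every sequence (a₁,…,a_N) of N pairwise distinct points of ℝ^d such that p(a_{i₁},…,a_{i_k}) = 0 for every p ∈ P and all indices 1 ≤ i₁ < ⋯ < i_k ≤ N, there exists an n-element subset B of {a₁,…,a_N} such that p(b₁,…,b_k) = 0 for every p ∈ P and every k-tuple (b₁,…,b_k) ∈ B^k (with arbitrary order and repetitions allowed). -/

import Mathlib

open MvPolynomial Module

noncomputable def substFst (d k : ℕ) (x : Fin d → ℝ) :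
    MvPolynomial (Fin (k+1) × Fin d) ℝ →ₐ[ℝ] MvPolynomial (Fin k × Fin d) ℝ :=
  aeval (fun v => Fin.cases (C (x v.2)) (fun i => X (i, v.2)) v.1)

lemma aeval_real {σ : Type*} (f : σ → ℝ) (p : MvPolynomial σ ℝ) :
    aeval f p = eval f p := by
  rw [← coe_aeval_eq_eval]; rfl

lemma eval_congr {σ : Type*} {f g : σ → ℝ} (p : MvPolynomial σ ℝ)
    (h : ∀ v, f v = g v) : eval f p = eval g p := by
  rw [funext h]

lemma substFst_eval {d k : ℕ} (x : Fin d → ℝ) (y : Fin k × Fin d → ℝ)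
    (q : MvPolynomial (Fin (k+1) × Fin d) ℝ) :
    eval y (substFst d k x q)
      = eval (fun v : Fin (k+1) × Fin d =>
          Fin.cases (motive := fun _ => ℝ) (x v.2) (fun i => y (i, v.2)) v.1) q := by
  rw [← aeval_real, ← aeval_real, substFst, comp_aeval_apply]
  have hfun : (fun v : Fin (k+1) × Fin d =>
      (aeval (R := ℝ) y)
        (Fin.cases (C (x v.2)) (fun i1 => X (i1, v.2)) v.1))
      = fun v : Fin (k+1) × Fin d =>
          Fin.cases (motive := fun _ => ℝ) (x v.2) (fun i => y (i, v.2)) v.1 := by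
    funext v
    obtain ⟨i, j⟩ := v
    induction i using Fin.cases with
    | zero => simp
    | succ i => simp
  rw [hfun]

lemma totalDegree_aeval_le {σ τ : Type*} (g : σ → MvPolynomial τ ℝ)
    (hg : ∀ v, (g v).totalDegree ≤ 1) (p : MvPolynomial σ ℝ) :
    (aeval g p).totalDegree ≤ p.totalDegree := by
  conv_lhs => rw [p.as_sum, map_sum]
  refine (totalDegree_finset_sum _ _).trans (Finset.sup_le fun v hv => ?_)
  rw [aeval_monomial]
  refine (totalDegree_mul _ _).trans ?_
  have h1 : (algebraMap ℝ (MvPolynomial τ ℝ) (coeff v p)).totalDegree = 0 := totalDegree_C _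
  rw [h1, zero_add]
  refine le_trans ?_ (le_totalDegree hv)
  rw [Finsupp.prod]
  refine (totalDegree_finset_prod _ _).trans ?_
  rw [Finsupp.sum]
  refine Finset.sum_le_sum fun i _ => ?_
  exact (totalDegree_pow _ _).trans (by
    calc v i * (g i).totalDegree ≤ v i * 1 := Nat.mul_le_mul_left _ (hg i)
    _ = v i := Nat.mul_one _)

lemma substFst_totalDegree {d k : ℕ} (x : Fin d → ℝ)
    (q : MvPolynomial (Fin (k+1) × Fin d) ℝ) :
    (substFst d k x q).totalDegree ≤ q.totalDegree := by
  refine totalDegree_aeval_le _ (fun v => ?_) q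
  obtain ⟨i, j⟩ := v
  induction i using Fin.cases with
  | zero => simp [totalDegree_C]
  | succ i => simp [totalDegree_X]

noncomputable def Fbound (d D : ℕ) : ℕ → ℕ → ℕ
  | 0, n => n
  | (k+1), n =>
      (finrank ℝ (restrictTotalDegree (Fin k × Fin d) ℝ D) + 1) * Fbound d D k n

lemma key (d D : ℕ) : ∀ (k n N : ℕ), Fbound d D k n ≤ N →
    ∀ Q : Set (MvPolynomial (Fin k × Fin d) ℝ), (∀ q ∈ Q, q.totalDegree ≤ D) →
    ∀ a : Fin N → Fin d → ℝ,
    (∀ q ∈ Q, ∀ i : Fin k → Fin N, StrictMono i →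
       eval (fun v => a (i v.1) v.2) q = 0) →
    ∃ S : Finset (Fin N), S.card = n ∧
      ∀ q ∈ Q, ∀ t : Fin k → Fin N, (∀ i, t i ∈ S) →
        eval (fun v => a (t v.1) v.2) q = 0 := by
  intro k
  induction k with
  | zero =>
    intro n N hN Q hdeg a hvan
    obtain ⟨S, -, hScard⟩ := Finset.exists_subset_card_eq
      (show n ≤ (Finset.univ : Finset (Fin N)).card by simpa [Fbound] using hN)
    refine ⟨S, hScard, fun q hq t ht => ?_⟩
    have h0 := hvan q hq Fin.elim0 (fun i => i.elim0)
    have : (fun v : Fin 0 × Fin d => a (Fin.elim0 v.1) v.2)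
        = fun v : Fin 0 × Fin d => a (t v.1) v.2 := by
      funext v; exact v.1.elim0
    rwa [this] at h0
  | succ k IH =>
    intro n N hN Q hdeg a hvan
    set L := Fbound d D k n with hL
    set M := finrank ℝ (restrictTotalDegree (Fin k × Fin d) ℝ D) with hM
    have hNge : (M + 1) * L ≤ N := hN
    -- the chain of spans
    set U : ℕ → Submodule ℝ (MvPolynomial (Fin k × Fin d) ℝ) := fun m =>
      Submodule.span ℝ {r | ∃ q ∈ Q, ∃ s : Fin N, (s : ℕ) < m ∧ r = substFst d k (a s) q}
      with hU
    have hUmono : ∀ {m m'}, m ≤ m' → U m ≤ U m' := by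
      intro m m' h
      exact Submodule.span_mono (fun r ⟨q, hq, s, hs, hr⟩ => ⟨q, hq, s, lt_of_lt_of_le hs h, hr⟩)
    have hUV : ∀ m, U m ≤ restrictTotalDegree (Fin k × Fin d) ℝ D := by
      intro m
      refine Submodule.span_le.2 ?_
      rintro r ⟨q, hq, s, hs, rfl⟩
      rw [SetLike.mem_coe, mem_restrictTotalDegree]
      exact (substFst_totalDegree _ _).trans (hdeg q hq)
    -- find a stable block
    have hblock : ∃ i, i ≤ M ∧ U ((i + 1) * L) ≤ U (i * L) := by
      by_contra hcon
      push_neg at hcon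
      have hlt : ∀ i, i ≤ M → U (i * L) < U ((i + 1) * L) := fun i hi =>
        lt_of_le_of_ne (hUmono (by nlinarith)) (fun h => hcon i hi (le_of_eq h.symm))
      have hrank : ∀ i, i ≤ M + 1 → i ≤ finrank ℝ (U (i * L)) := by
        intro i
        induction i with
        | zero => intro _; exact Nat.zero_le _
        | succ i ih =>
          intro hi
          haveI : FiniteDimensional ℝ (U ((i + 1) * L)) :=
            Submodule.finiteDimensional_of_le (hUV _)
          have h1 := ih (by omega)
          have h2 := Submodule.finrank_lt_finrank_of_lt (hlt i (by omega))
          omega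
      have h3 := hrank (M + 1) le_rfl
      have h4 : finrank ℝ (U ((M + 1) * L)) ≤ M :=
        Submodule.finrank_mono (hUV _)
      omega
    obtain ⟨i₀, hi₀, hUstab⟩ := hblock
    set o := i₀ * L with ho
    have hoL : o + L ≤ N := by
      have : (i₀ + 1) * L ≤ (M + 1) * L := Nat.mul_le_mul_right _ (by omega)
      have h5 : (i₀ + 1) * L = o + L := by ring
      omega
    have hUo : U (o + L) ≤ U o := by
      have h5 : (i₀ + 1) * L = o + L := by ring
      rw [← h5]; exact hUstab
    -- the block subsequence
    have hemb : ∀ j : Fin L, o + (j : ℕ) < N := fun j => by have := j.2; omega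
    set emb : Fin L → Fin N := fun j => ⟨o + (j : ℕ), hemb j⟩ with hembdef
    set a' : Fin L → Fin d → ℝ := fun j => a (emb j) with ha'
    set Q' : Set (MvPolynomial (Fin k × Fin d) ℝ) :=
      {r | r ∈ U o ∧ r.totalDegree ≤ D} with hQ'
    -- elements of U o vanish on increasing k-tuples of the block
    have hQ'van : ∀ r ∈ Q', ∀ ii : Fin k → Fin L, StrictMono ii →
        eval (fun v => a' (ii v.1) v.2) r = 0 := by
      rintro r ⟨hrU, -⟩ ii hii
      have hker : U o ≤ LinearMap.ker
          (aeval (R := ℝ) fun v : Fin k × Fin d => a' (ii v.1) v.2).toLinearMap := by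
        refine Submodule.span_le.2 ?_
        rintro r' ⟨q, hq, s, hs, rfl⟩
        rw [SetLike.mem_coe, LinearMap.mem_ker, AlgHom.toLinearMap_apply, aeval_real,
          substFst_eval]
        set i' : Fin (k+1) → Fin N :=
          fun j => Fin.cases (motive := fun _ => Fin N) s (fun i => emb (ii i)) j with hi'
        have hmono : StrictMono i' := by
          intro u w huw
          induction u using Fin.cases with
          | zero =>
            induction w using Fin.cases with
            | zero => exact absurd huw (lt_irrefl _)
            | succ w' =>
              have h6 : i' 0 = s := by simp [hi']
              have h6' : i' (Fin.succ w') = emb (ii w') := by simp [hi']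
              rw [h6, h6', Fin.lt_def]
              simp only [hembdef]
              omega
          | succ u' =>
            induction w using Fin.cases with
            | zero => exact absurd huw (by simp [Fin.lt_def])
            | succ w' =>
              have h6 : i' (Fin.succ u') = emb (ii u') := by simp [hi']
              have h6' : i' (Fin.succ w') = emb (ii w') := by simp [hi']
              rw [h6, h6', Fin.lt_def]
              simp only [hembdef]
              have := hii (by rwa [Fin.succ_lt_succ_iff] at huw)
              rw [Fin.lt_def] at this
              omega
        have h7 := hvan q hq i' hmono
        refine Eq.trans (eval_congr q fun v => ?_) h7
        obtain ⟨iv, jv⟩ := v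
        induction iv using Fin.cases with
        | zero => simp [hi']
        | succ iv => simp [hi', ha']
      have := hker hrU
      rw [LinearMap.mem_ker, AlgHom.toLinearMap_apply, aeval_real] at this
      exact this
    have hQ'deg : ∀ r ∈ Q', r.totalDegree ≤ D := fun r hr => hr.2
    obtain ⟨S', hS'card, hS'⟩ := IH n L le_rfl Q' hQ'deg a' hQ'van
    have hembinj : Function.Injective emb := by
      intro j1 j2 h
      have := congrArg Fin.val h
      simp only [hembdef] at this
      exact Fin.ext (by omega)
    refine ⟨S'.image emb, by rw [Finset.card_image_of_injective _ hembinj, hS'card],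
      fun q hq t ht => ?_⟩
    have hchoose : ∀ i, ∃ j, j ∈ S' ∧ emb j = t i := by
      intro i
      have := ht i
      rw [Finset.mem_image] at this
      obtain ⟨j, hj1, hj2⟩ := this
      exact ⟨j, hj1, hj2⟩
    choose g hg1 hg2 using hchoose
    -- substituted polynomial is in Q'
    have hmem : substFst d k (a' (g 0)) q ∈ Q' := by
      constructor
      · refine hUo (Submodule.subset_span ?_)
        refine ⟨q, hq, emb (g 0), ?_, rfl⟩
        simp only [hembdef]
        have := (g 0).2
        omega
      · exact (substFst_totalDegree _ _).trans (hdeg q hq)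
    have h9 := hS' _ hmem (fun i => g (Fin.succ i)) (fun i => hg1 _)
    rw [substFst_eval] at h9
    refine Eq.trans (eval_congr q fun v => ?_) h9
    obtain ⟨iv, jv⟩ := v
    induction iv using Fin.cases with
    | zero => simp [ha', ← hg2]
    | succ iv => simp [ha', ← hg2]

/-- for all positive `d, k, D, n` there is `N` such that whenever a set
`P` of polynomials in the `d·k` coordinates of `k` points of `ℝ^d`, all of total degree
at most `D`, vanishes on every increasing `k`-tuple of a sequence of `N` pairwise
distinct points of `ℝ^d`, there is an `n`-element subset `B` of the terms of the
sequence such that every `p ∈ P` vanishes on every `k`-tuple of `B` (arbitrary order,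
repetitions allowed). -/
theorem stmt15 (d k D n : ℕ) (hd : 0 < d) (hk : 0 < k) (hD : 0 < D) (hn : 0 < n) :
    ∃ N : ℕ, ∀ P : Set (MvPolynomial (Fin k × Fin d) ℝ),
      (∀ p ∈ P, p.totalDegree ≤ D) →
      ∀ a : Fin N → Fin d → ℝ, Function.Injective a →
      (∀ p ∈ P, ∀ i : Fin k → Fin N, StrictMono i →
        MvPolynomial.eval (fun v => a (i v.1) v.2) p = 0) →
      ∃ B : Finset (Fin d → ℝ), B.card = n ∧ ↑B ⊆ Set.range a ∧
        ∀ p ∈ P, ∀ b : Fin k → Fin d → ℝ, (∀ i, b i ∈ B) →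
          MvPolynomial.eval (fun v => b v.1 v.2) p = 0 := by
  refine ⟨Fbound d D k n, fun P hdeg a hainj hvan => ?_⟩
  obtain ⟨S, hScard, hS⟩ := key d D k n _ le_rfl P hdeg a hvan
  refine ⟨S.image a, by rw [Finset.card_image_of_injective _ hainj, hScard], ?_, ?_⟩
  · intro x hx
    rw [Finset.coe_image] at hx
    obtain ⟨i, -, rfl⟩ := hx
    exact Set.mem_range_self _
  · intro p hp b hb
    have hchoose : ∀ i, ∃ j, j ∈ S ∧ a j = b i := by
      intro i
      have := hb i
      rw [Finset.mem_image] at this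
      exact this.imp fun j hj => ⟨hj.1, hj.2⟩
    choose t ht1 ht2 using hchoose
    have := hS p hp t ht1
    refine Eq.trans (eval_congr p fun v => ?_) this
    rw [ht2]
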